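/- arXiv:2310.18835 — 3 statements merged into one kernel-verified Lean document; each statement's English description precedes it below -/
import Mathlib

section
/- For i ≠ j, the partial derivative of F_i with respect to q_j equals G_{ij}·(dp_j/dq_j)·[(p_i + η_i(1 − p_i))(w − x) − (1 − p_i + η_i p_i)(y − z)], and this quantity is nonnegative whenever G_{ij} ≥ 0, w > x, z > y, η_i ∈ [0,1], and p_i, p_j ∈ [0,1] with dp_j/dq_j ≥ 0. Hence the EWA attraction dynamics form a cooperative dynamical system. -/
/-- for i ≠ j, the partial derivative of F_i with respect to q_j equals
G_{ij}·(dp_j/dq_j)·[(p_i + η_i(1−p_i))(w−x) − (1−p_i+η_i p_i)(y−z)], where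
dp_j/dq_j = λ_j p_j (1−p_j), and this quantity is nonnegative; hence the EWA dynamics
are cooperative. -/
theorem stmt9 {n : ℕ} (G : Matrix (Fin n) (Fin n) ℝ) (ψ η lam : Fin n → ℝ)
    (w x y z : ℝ) (q : Fin n → ℝ) (i j : Fin n) (hij : i ≠ j)
    (hG : ∀ a b, 0 ≤ G a b) (hGsym : G.IsSymm)
    (hwx : w > x) (hzy : z > y)
    (hη : ∀ k, η k ∈ Set.Icc (0 : ℝ) 1) (hlam : ∀ k, 0 < lam k) :
    let p : Fin n → ℝ → ℝ := fun k t => 1 / (1 + Real.exp (-(lam k) * t))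
    let Fi : (Fin n → ℝ) → ℝ := fun qv =>
      -(ψ i) * qv i
        + (p i (qv i) + η i * (1 - p i (qv i)))
          * (∑ k, G i k * (p k (qv k) * w + (1 - p k (qv k)) * x))
        - (1 - p i (qv i) + η i * p i (qv i))
          * (∑ k, G i k * (p k (qv k) * y + (1 - p k (qv k)) * z))
    let D : ℝ := G i j * (lam j * p j (q j) * (1 - p j (q j)))
      * ((p i (q i) + η i * (1 - p i (q i))) * (w - x)
        - (1 - p i (q i) + η i * p i (q i)) * (y - z))
    HasDerivAt (fun t => Fi (Function.update q j t)) D (q j) ∧ 0 ≤ D := by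
  intro p Fi D
  have hexp : ∀ (k : Fin n) (t : ℝ), 0 < Real.exp (-(lam k) * t) := fun k t => Real.exp_pos _
  have hp_pos : ∀ (k : Fin n) (t : ℝ), 0 < p k t := by
    intro k t
    have := hexp k t
    simp only [p]
    positivity
  have hp_lt : ∀ (k : Fin n) (t : ℝ), p k t < 1 := by
    intro k t
    have h := hexp k t
    simp only [p]
    rw [div_lt_one (by positivity)]
    linarith
  have hpderiv : ∀ (k : Fin n) (t : ℝ),
      HasDerivAt (fun s => p k s) (lam k * p k t * (1 - p k t)) t := by
    intro k t
    have he := hexp k t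
    have hne : (1 : ℝ) + Real.exp (-(lam k) * t) ≠ 0 := by positivity
    have h0 : HasDerivAt (fun s : ℝ => -(lam k) * s) (-(lam k)) t := by
      simpa using (hasDerivAt_id t).const_mul (-(lam k))
    have h1 : HasDerivAt (fun s : ℝ => 1 + Real.exp (-(lam k) * s))
        (Real.exp (-(lam k) * t) * (-(lam k))) t :=
      ((Real.hasDerivAt_exp _).comp t h0).const_add 1
    have h2 := h1.inv hne
    have heq : (fun s => p k s) = fun s => (1 + Real.exp (-(lam k) * s))⁻¹ := by
      funext s; simp [p, one_div]
    rw [heq]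
    refine h2.congr_deriv ?_
    simp only [p]
    field_simp
    ring
  set d := lam j * p j (q j) * (1 - p j (q j)) with hd
  have hpj := hpderiv j (q j)
  have hsum : ∀ a b : ℝ, HasDerivAt
      (fun t => ∑ k, G i k * (p k (Function.update q j t k) * a
        + (1 - p k (Function.update q j t k)) * b))
      (G i j * (d * a - d * b)) (q j) := by
    intro a b
    have key : ∀ k : Fin n, HasDerivAt
        (fun t => G i k * (p k (Function.update q j t k) * a
          + (1 - p k (Function.update q j t k)) * b))
        (if k = j then G i j * (d * a - d * b) else 0) (q j) := by
      intro k
      by_cases hk : k = j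
      · subst hk
        rw [if_pos rfl]
        simp only [Function.update_self]
        have h := ((hpj.mul_const a).add
          (((hasDerivAt_const (q k) (1:ℝ)).sub hpj).mul_const b)).const_mul (G i k)
        refine h.congr_deriv ?_
        rw [hd]
        ring
      · simp only [Function.update_of_ne hk, if_neg hk]
        exact hasDerivAt_const _ _
    have h := HasDerivAt.fun_sum (fun k (_ : k ∈ Finset.univ) => key k)
    refine h.congr_deriv ?_
    rw [Finset.sum_ite_eq' Finset.univ j (fun _ => G i j * (d * a - d * b))]
    simp
  have hFi : (fun t => Fi (Function.update q j t)) =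
      fun t => -(ψ i) * q i
        + (p i (q i) + η i * (1 - p i (q i)))
          * (∑ k, G i k * (p k (Function.update q j t k) * w
            + (1 - p k (Function.update q j t k)) * x))
        - (1 - p i (q i) + η i * p i (q i))
          * (∑ k, G i k * (p k (Function.update q j t k) * y
            + (1 - p k (Function.update q j t k)) * z)) := by
    funext t
    simp only [Fi, Function.update_of_ne hij]
  have hderiv : HasDerivAt (fun t => Fi (Function.update q j t))
      (0 + (p i (q i) + η i * (1 - p i (q i))) * (G i j * (d * w - d * x))
        - (1 - p i (q i) + η i * p i (q i)) * (G i j * (d * y - d * z))) (q j) := by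
    rw [hFi]
    exact ((hasDerivAt_const _ _).add ((hsum w x).const_mul _)).sub
      ((hsum y z).const_mul _)
  have hDeq : D = 0 + (p i (q i) + η i * (1 - p i (q i))) * (G i j * (d * w - d * x))
      - (1 - p i (q i) + η i * p i (q i)) * (G i j * (d * y - d * z)) := by
    simp only [D, hd]
    ring
  have hA : 0 ≤ p i (q i) + η i * (1 - p i (q i)) := by
    have h1 := (hp_pos i (q i)).le
    have h2 := (hp_lt i (q i)).le
    nlinarith [(hη i).1, (hη i).2]
  have hB : 0 ≤ 1 - p i (q i) + η i * p i (q i) := by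
    have h1 := (hp_pos i (q i)).le
    have h2 := (hp_lt i (q i)).le
    nlinarith [(hη i).1, (hη i).2]
  have hd0 : 0 ≤ d := by
    have h1 := (hp_pos j (q j)).le
    have h2 := (hp_lt j (q j)).le
    have h3 := (hlam j).le
    rw [hd]
    exact mul_nonneg (mul_nonneg h3 h1) (by linarith)
  have hbr : 0 ≤ (p i (q i) + η i * (1 - p i (q i))) * (w - x)
      - (1 - p i (q i) + η i * p i (q i)) * (y - z) := by
    nlinarith
  refine ⟨hDeq ▸ hderiv, ?_⟩
  have : 0 ≤ G i j * d := mul_nonneg (hG i j) hd0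
  calc (0:ℝ) ≤ G i j * d * ((p i (q i) + η i * (1 - p i (q i))) * (w - x)
      - (1 - p i (q i) + η i * p i (q i)) * (y - z)) := mul_nonneg this hbr
    _ = D := by simp only [D, hd]
end

section
/- For the symmetric-choice EWA dynamics, the Jacobian matrix of F at q = 0 has entries J_{ii} = −ψᵢ + (1 − ηᵢ)·dᵢ·(h + l)·λᵢ/4 and, for j ≠ i, J_{ij} = G_{ij}·(1 + ηᵢ)·(h − l)·λ_j/4. -/
lemma logistic_hasDerivAt (a : ℝ) :
    HasDerivAt (fun t : ℝ => 1 / (1 + Real.exp (-a * t))) (a / 4) 0 := by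
  have h1 : HasDerivAt (fun t : ℝ => -a * t) (-a) 0 := by
    simpa using (hasDerivAt_id (0 : ℝ)).const_mul (-a)
  have h2 : HasDerivAt (fun t : ℝ => 1 + Real.exp (-a * t))
      (Real.exp (-a * 0) * (-a)) 0 := (h1.exp).const_add 1
  have hne : (1 + Real.exp (-a * 0)) ≠ 0 := by positivity
  have h3 := h2.inv hne
  simp only [one_div]
  refine h3.congr_deriv ?_
  simp [Real.exp_zero]
  norm_num

/-- the Jacobian of the symmetric-choice EWA dynamics at q = 0 has entries
J_{ii} = −ψᵢ + (1−ηᵢ)dᵢ(h+l)λᵢ/4 and J_{ij} = G_{ij}(1+ηᵢ)(h−l)λⱼ/4 for j ≠ i,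
stated via partial derivatives at 0. -/
theorem stmt11 {n : ℕ} (G : Matrix (Fin n) (Fin n) ℝ) (ψ η lam : Fin n → ℝ)
    (h l : ℝ) (hhl : h > l)
    (hψ : ∀ i, 0 < ψ i) (hlam : ∀ i, 0 < lam i) (hη : ∀ i, η i ∈ Set.Icc (0 : ℝ) 1)
    (hG01 : ∀ a b, G a b = 0 ∨ G a b = 1) (hGsym : G.IsSymm) (hdiag : ∀ a, G a a = 0) :
    let p : Fin n → ℝ → ℝ := fun k t => 1 / (1 + Real.exp (-(lam k) * t))
    let F : Fin n → (Fin n → ℝ) → ℝ := fun i qv =>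
      -(ψ i) * qv i
        + (p i (qv i) + η i * (1 - p i (qv i)))
          * (∑ j, G i j * (p j (qv j) * h + (1 - p j (qv j)) * l))
        - (1 - p i (qv i) + η i * p i (qv i))
          * (∑ j, G i j * (p j (qv j) * l + (1 - p j (qv j)) * h))
    let d : Fin n → ℝ := fun i => ∑ j, G i j
    (∀ i : Fin n,
        HasDerivAt (fun t => F i (Function.update (fun _ => (0 : ℝ)) i t))
          (-(ψ i) + (1 - η i) * d i * (h + l) * lam i / 4) 0) ∧
      (∀ i j : Fin n, j ≠ i →
        HasDerivAt (fun t => F i (Function.update (fun _ => (0 : ℝ)) j t))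
          (G i j * (1 + η i) * (h - l) * lam j / 4) 0) := by
  intro p F d
  have hp0 : ∀ k : Fin n, p k 0 = 1 / 2 := by
    intro k; simp only [p, mul_zero, Real.exp_zero]; norm_num
  have hP : ∀ k : Fin n, HasDerivAt (p k) (lam k / 4) 0 := fun k =>
    logistic_hasDerivAt (lam k)
  constructor
  · intro i
    have key : (fun t => F i (Function.update (fun _ => (0 : ℝ)) i t))
        = fun t => -(ψ i) * t + (1 - η i) * (2 * p i t - 1) * (d i * ((h + l) / 2)) := by
      funext t
      simp only [F]
      have hs1 : ∑ j, G i j *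
          (p j (Function.update (fun _ => (0 : ℝ)) i t j) * h
            + (1 - p j (Function.update (fun _ => (0 : ℝ)) i t j)) * l)
          = d i * ((h + l) / 2) := by
        have : ∀ j ∈ Finset.univ, G i j *
            (p j (Function.update (fun _ => (0 : ℝ)) i t j) * h
              + (1 - p j (Function.update (fun _ => (0 : ℝ)) i t j)) * l)
            = G i j * ((h + l) / 2) := by
          intro k _
          by_cases hk : k = i
          · subst hk; rw [hdiag]; ring
          · rw [Function.update_of_ne hk, hp0]; ring
        rw [Finset.sum_congr rfl this, ← Finset.sum_mul]
      have hs2 : ∑ j, G i j *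
          (p j (Function.update (fun _ => (0 : ℝ)) i t j) * l
            + (1 - p j (Function.update (fun _ => (0 : ℝ)) i t j)) * h)
          = d i * ((h + l) / 2) := by
        have : ∀ j ∈ Finset.univ, G i j *
            (p j (Function.update (fun _ => (0 : ℝ)) i t j) * l
              + (1 - p j (Function.update (fun _ => (0 : ℝ)) i t j)) * h)
            = G i j * ((h + l) / 2) := by
          intro k _
          by_cases hk : k = i
          · subst hk; rw [hdiag]; ring
          · rw [Function.update_of_ne hk, hp0]; ring
        rw [Finset.sum_congr rfl this, ← Finset.sum_mul]
      rw [hs1, hs2, Function.update_self]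
      ring
    rw [key]
    have h1 : HasDerivAt (fun t : ℝ => -(ψ i) * t) (-(ψ i)) 0 := by
      simpa using (hasDerivAt_id (0 : ℝ)).const_mul (-(ψ i))
    have h2 := ((((hP i).const_mul 2).sub_const 1).const_mul (1 - η i)).mul_const
      (d i * ((h + l) / 2))
    refine (h1.add h2).congr_deriv ?_
    ring
  · intro i j hji
    have key : (fun t => F i (Function.update (fun _ => (0 : ℝ)) j t))
        = fun t => ((1 + η i) / 2 * (G i j * (h - l))) * (2 * p j t - 1) := by
      funext t
      simp only [F]
      have hs1 : ∑ k, G i k *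
          (p k (Function.update (fun _ => (0 : ℝ)) j t k) * h
            + (1 - p k (Function.update (fun _ => (0 : ℝ)) j t k)) * l)
          = G i j * (p j t * h + (1 - p j t) * l)
            + ∑ k ∈ Finset.univ.erase j, G i k * ((h + l) / 2) := by
        rw [← Finset.add_sum_erase _ _ (Finset.mem_univ j), Function.update_self]
        congr 1
        refine Finset.sum_congr rfl ?_
        intro k hk
        rw [Function.update_of_ne (Finset.ne_of_mem_erase hk), hp0]
        ring
      have hs2 : ∑ k, G i k *
          (p k (Function.update (fun _ => (0 : ℝ)) j t k) * l
            + (1 - p k (Function.update (fun _ => (0 : ℝ)) j t k)) * h)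
          = G i j * (p j t * l + (1 - p j t) * h)
            + ∑ k ∈ Finset.univ.erase j, G i k * ((h + l) / 2) := by
        rw [← Finset.add_sum_erase _ _ (Finset.mem_univ j), Function.update_self]
        congr 1
        refine Finset.sum_congr rfl ?_
        intro k hk
        rw [Function.update_of_ne (Finset.ne_of_mem_erase hk), hp0]
        ring
      rw [hs1, hs2, Function.update_of_ne (Ne.symm hji), hp0]
      ring
    rw [key]
    have h2 := (((hP j).const_mul 2).sub_const 1).const_mul ((1 + η i) / 2 * (G i j * (h - l)))
    refine h2.congr_deriv ?_
    ring
end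

section
/- Let J be an n×n real matrix with n distinct eigenvalues κ₁ > Re(κ₂) ≥ ... ≥ Re(κₙ), κ₁ real and simple, with right eigenvector v₁ having all entries strictly positive and left eigenvector u₁. For the linear ODE q̇ = J q with initial condition q(0), if u₁ᵀ q(0) > 0 then there exists T such that q(t) has all entries strictly positive for all t > T; if u₁ᵀ q(0) < 0 then there exists T such that q(t) has all entries strictly negative for all t > T. -/
open Matrix
attribute [local instance] Matrix.linftyOpNormedRing Matrix.linftyOpNormedAlgebra

lemma exp_mulVec_eigen {n : ℕ} (A : Matrix (Fin n) (Fin n) ℂ) (v : Fin n → ℂ) (κ : ℂ)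
    (h : A *ᵥ v = κ • v) : NormedSpace.exp A *ᵥ v = Complex.exp κ • v := by
  have hpow : ∀ k : ℕ, (A ^ k) *ᵥ v = (κ ^ k) • v := by
    intro k; induction k with
    | zero => simp
    | succ k ih =>
      rw [pow_succ, ← Matrix.mulVec_mulVec, h, Matrix.mulVec_smul, ih, smul_smul, pow_succ, mul_comm]
  let L : Matrix (Fin n) (Fin n) ℂ →ₗ[ℂ] (Fin n → ℂ) :=
    { toFun := fun M => M *ᵥ v
      map_add' := fun M N => Matrix.add_mulVec M N v
      map_smul' := fun c M => Matrix.smul_mulVec c M v }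
  have hLc : Continuous L := L.continuous_of_finiteDimensional
  have hsum : Summable (fun k : ℕ => (((Nat.factorial k : ℂ)))⁻¹ • A ^ k) := NormedSpace.expSeries_summable' A
  have h1 : NormedSpace.exp A *ᵥ v = ∑' k : ℕ, L ((((Nat.factorial k : ℂ)))⁻¹ • A ^ k) := by
    rw [NormedSpace.exp_eq_tsum ℂ]
    exact ((hsum.hasSum.map L hLc).tsum_eq).symm
  have h2 : ∀ k : ℕ, L ((((Nat.factorial k : ℂ)))⁻¹ • A ^ k) = ((((Nat.factorial k : ℂ)))⁻¹ * κ ^ k) • v := by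
    intro k
    show ((((Nat.factorial k : ℂ)))⁻¹ • A ^ k) *ᵥ v = _
    rw [Matrix.smul_mulVec, hpow, smul_smul]
  rw [h1]
  simp_rw [h2]
  rw [Summable.tsum_smul_const]
  · congr 1
    rw [Complex.exp_eq_exp_ℂ, NormedSpace.exp_eq_tsum ℂ]
    simp [smul_eq_mul]
  · have := NormedSpace.expSeries_summable' (𝕂 := ℂ) κ
    simpa [smul_eq_mul] using this

lemma mapc_mulVec {n : ℕ} (A : Matrix (Fin n) (Fin n) ℝ) (x : Fin n → ℝ) :
    A.map (algebraMap ℝ ℂ) *ᵥ (fun i => (x i : ℂ)) = fun i => ((A *ᵥ x) i : ℂ) := by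
  funext i
  simp [Matrix.mulVec, dotProduct, Matrix.map_apply, Algebra.algebraMap_eq_smul_one]

lemma map_exp_complex {n : ℕ} (A : Matrix (Fin n) (Fin n) ℝ) :
    (NormedSpace.exp A).map (algebraMap ℝ ℂ) = NormedSpace.exp (A.map (algebraMap ℝ ℂ)) := by
  have hc : Continuous (AlgHom.mapMatrix (Algebra.ofId ℝ ℂ) :
      Matrix (Fin n) (Fin n) ℝ →ₐ[ℝ] Matrix (Fin n) (Fin n) ℂ) := by
    exact LinearMap.continuous_of_finiteDimensional
      ((AlgHom.mapMatrix (Algebra.ofId ℝ ℂ) : Matrix (Fin n) (Fin n) ℝ →ₐ[ℝ]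
        Matrix (Fin n) (Fin n) ℂ)).toLinearMap
  have key := NormedSpace.map_exp (AlgHom.mapMatrix (Algebra.ofId ℝ ℂ) :
    Matrix (Fin n) (Fin n) ℝ →ₐ[ℝ] Matrix (Fin n) (Fin n) ℂ) hc A
  simp only [AlgHom.mapMatrix_apply] at key
  exact key

/-- for q̇ = Jq where J has n distinct (complex) eigenvalues, a real
simple dominant eigenvalue κ₁ with strictly positive right eigenvector v₁ and left
eigenvector u₁ (normalized u₁ᵀv₁ = 1): if u₁ᵀq(0) > 0 then q(t) = exp(tJ)q(0) is
eventually entrywise positive, and if u₁ᵀq(0) < 0 it is eventually entrywise negative. -/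
theorem stmt16 {n : ℕ} (J : Matrix (Fin n) (Fin n) ℝ) (κ1 : ℝ) (u1 v1 : Fin n → ℝ)
    (hdistinct : (spectrum ℂ (J.map (algebraMap ℝ ℂ))).ncard = n)
    (hmem : (κ1 : ℂ) ∈ spectrum ℂ (J.map (algebraMap ℝ ℂ)))
    (hdom : ∀ μ ∈ spectrum ℂ (J.map (algebraMap ℝ ℂ)), μ ≠ (κ1 : ℂ) → μ.re < κ1)
    (hright : J *ᵥ v1 = κ1 • v1) (hleft : Jᵀ *ᵥ u1 = κ1 • u1)
    (hpos : ∀ i, 0 < v1 i) (hnorm : u1 ⬝ᵥ v1 = 1) (q0 : Fin n → ℝ) :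
    (0 < u1 ⬝ᵥ q0 →
      ∃ T : ℝ, ∀ t > T, ∀ i, 0 < (NormedSpace.exp (t • J) *ᵥ q0) i) ∧
    (u1 ⬝ᵥ q0 < 0 →
      ∃ T : ℝ, ∀ t > T, ∀ i, (NormedSpace.exp (t • J) *ᵥ q0) i < 0) := by
  rcases Nat.eq_zero_or_pos n with hn | hn
  · exact ⟨fun _ => ⟨0, fun t _ i => absurd i.isLt (by omega)⟩,
      fun _ => ⟨0, fun t _ i => absurd i.isLt (by omega)⟩⟩
  classical
  set Jc := J.map (algebraMap ℝ ℂ) with hJcdef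
  set S := spectrum ℂ Jc with hSdef
  -- S is finite with card n
  have hSfin : S.Finite := by
    by_contra h
    rw [Set.Infinite.ncard h] at hdistinct
    omega
  haveI : Fintype S := hSfin.fintype
  have hcard : Fintype.card S = n := by
    rw [← Nat.card_eq_fintype_card, Nat.card_coe_set_eq, hdistinct]
  -- spectrum of the endomorphism
  have hspec : spectrum ℂ (Matrix.mulVecLin Jc) = S := by
    have : Matrix.mulVecLin Jc = Matrix.toLinAlgEquiv' Jc := rfl
    rw [this, AlgEquiv.spectrum_eq]
  -- complexifications
  set v1c : Fin n → ℂ := fun i => (v1 i : ℂ) with hv1c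
  set u1c : Fin n → ℂ := fun i => (u1 i : ℂ) with hu1c
  set q0c : Fin n → ℂ := fun i => (q0 i : ℂ) with hq0c
  have hrightc : Jc *ᵥ v1c = (κ1 : ℂ) • v1c := by
    rw [hv1c, mapc_mulVec, hright]; funext i
    simp only [Pi.smul_apply, smul_eq_mul, Complex.ofReal_mul]
  have hleftc : Jcᵀ *ᵥ u1c = (κ1 : ℂ) • u1c := by
    rw [hu1c, ← Matrix.transpose_map, mapc_mulVec, hleft]
    funext i
    simp only [Pi.smul_apply, smul_eq_mul, Complex.ofReal_mul]
  have hnormc : u1c ⬝ᵥ v1c = 1 := by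
    rw [hu1c, hv1c]
    have : ((u1 ⬝ᵥ v1 : ℝ) : ℂ) = 1 := by rw [hnorm]; norm_num
    rw [← this]; simp [dotProduct]
  -- eigenvectors for each eigenvalue
  have hev : ∀ μ : S, ∃ w : Fin n → ℂ, w ≠ 0 ∧ Jc *ᵥ w = (μ : ℂ) • w := by
    intro μ
    have h1 : Module.End.HasEigenvalue (Matrix.mulVecLin Jc) (μ : ℂ) :=
      Module.End.hasEigenvalue_iff_mem_spectrum.mpr (by rw [hspec]; exact μ.2)
    obtain ⟨w, hw⟩ := h1.exists_hasEigenvector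
    exact ⟨w, hw.2, hw.apply_eq_smul⟩
  set μ0 : S := ⟨(κ1 : ℂ), hmem⟩ with hμ0
  set w : S → (Fin n → ℂ) := fun μ =>
    if μ = μ0 then v1c else Classical.choose (hev μ) with hw
  have hwE : ∀ μ : S, Jc *ᵥ w μ = (μ : ℂ) • w μ := by
    intro μ
    by_cases h : μ = μ0
    · subst h; simp only [hw, if_pos rfl]; exact hrightc
    · simp only [hw, if_neg h]; exact (Classical.choose_spec (hev μ)).2
  have hw0 : ∀ μ : S, w μ ≠ 0 := by
    intro μ
    by_cases h : μ = μ0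
    · subst h; simp only [hw, if_pos rfl]
      intro hc
      have := congrFun hc ⟨0, hn⟩
      simp only [hv1c, Pi.zero_apply, Complex.ofReal_eq_zero] at this
      exact (hpos ⟨0, hn⟩).ne' this
    · simp only [hw, if_neg h]; exact (Classical.choose_spec (hev μ)).1
  -- linear independence and basis
  have hli : LinearIndependent ℂ w := by
    apply Module.End.eigenvectors_linearIndependent' (Matrix.mulVecLin Jc)
      (fun μ : S => (μ : ℂ)) Subtype.coe_injective
    intro μ
    exact ⟨Module.End.mem_eigenspace_iff.mpr (hwE μ), hw0 μ⟩
  have hfr : Fintype.card S = Module.finrank ℂ (Fin n → ℂ) := by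
    simp [hcard]
  haveI : Nonempty S := ⟨⟨(κ1 : ℂ), hmem⟩⟩
  let b : Module.Basis S ℂ (Fin n → ℂ) := basisOfLinearIndependentOfCardEqFinrank hli hfr
  have hb : ∀ μ, b μ = w μ := fun μ => by
    simp [b, coe_basisOfLinearIndependentOfCardEqFinrank]
  set c : S → ℂ := fun μ => b.repr q0c μ with hc
  have hdecomp : ∑ μ : S, c μ • w μ = q0c := by
    conv_rhs => rw [← b.sum_repr q0c]
    exact Finset.sum_congr rfl fun μ _ => by rw [hb]
  -- orthogonality: u1c ⬝ᵥ w μ = 0 for μ ≠ μ0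
  have horth : ∀ μ : S, μ ≠ μ0 → u1c ⬝ᵥ w μ = 0 := by
    intro μ hne
    have h1 : u1c ⬝ᵥ (Jc *ᵥ w μ) = (κ1 : ℂ) * (u1c ⬝ᵥ w μ) := by
      rw [Matrix.dotProduct_mulVec, ← Matrix.mulVec_transpose, hleftc]
      simp [smul_dotProduct, smul_eq_mul]
    have h2 : u1c ⬝ᵥ (Jc *ᵥ w μ) = (μ : ℂ) * (u1c ⬝ᵥ w μ) := by
      rw [hwE μ]
      simp [dotProduct_smul, smul_eq_mul]
    have h3 : ((κ1 : ℂ) - (μ : ℂ)) * (u1c ⬝ᵥ w μ) = 0 := by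
      rw [sub_mul, h1.symm.trans h2]; ring
    have h4 : (κ1 : ℂ) - (μ : ℂ) ≠ 0 := by
      intro hc0
      apply hne
      apply Subtype.ext
      linear_combination -hc0
    exact (mul_eq_zero.mp h3).resolve_left h4
  -- coefficient at μ0
  have hc0 : c μ0 = ((u1 ⬝ᵥ q0 : ℝ) : ℂ) := by
    have h1 : u1c ⬝ᵥ q0c = ∑ μ : S, c μ * (u1c ⬝ᵥ w μ) := by
      rw [← hdecomp]
      simp only [dotProduct, Finset.sum_apply, Pi.smul_apply, smul_eq_mul,
        Finset.mul_sum]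
      rw [Finset.sum_comm]
      exact Finset.sum_congr rfl fun μ _ => Finset.sum_congr rfl fun i _ => by ring
    have h2 : u1c ⬝ᵥ q0c = ((u1 ⬝ᵥ q0 : ℝ) : ℂ) := by
      simp [hu1c, hq0c, dotProduct]
    rw [h1, Finset.sum_eq_single μ0] at h2
    · rw [← h2]
      have : w μ0 = v1c := by simp [hw]
      rw [this, hnormc, mul_one]
    · intro μ _ hne
      rw [horth μ hne, mul_zero]
    · intro h; exact absurd (Finset.mem_univ μ0) h
  -- key identity
  have hkey : ∀ (t : ℝ) (i : Fin n),
      (((NormedSpace.exp (t • J) *ᵥ q0) i : ℝ) : ℂ)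
        = ∑ μ : S, c μ * Complex.exp ((t : ℂ) * (μ : ℂ)) * w μ i := by
    intro t i
    have hmap : (t • J).map (algebraMap ℝ ℂ) = (t : ℂ) • Jc := by
      funext a b
      simp only [Matrix.map_apply, Matrix.smul_apply, smul_eq_mul, hJcdef]
      push_cast
      ring_nf
      exact mul_comm _ _
    have h1 : (fun j => (((NormedSpace.exp (t • J) *ᵥ q0) j : ℝ) : ℂ))
        = NormedSpace.exp ((t : ℂ) • Jc) *ᵥ q0c := by
      rw [← mapc_mulVec, map_exp_complex, hmap]
    have h2 : NormedSpace.exp ((t : ℂ) • Jc) *ᵥ q0c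
        = ∑ μ : S, c μ • (Complex.exp ((t : ℂ) * (μ : ℂ)) • w μ) := by
      rw [← hdecomp]
      have h3 : NormedSpace.exp ((t : ℂ) • Jc) *ᵥ (∑ μ : S, c μ • w μ)
          = ∑ μ : S, c μ • (NormedSpace.exp ((t : ℂ) • Jc) *ᵥ w μ) := by
        rw [← Matrix.mulVecLin_apply, map_sum]
        exact Finset.sum_congr rfl fun μ _ => by
          rw [_root_.map_smul, Matrix.mulVecLin_apply]
      rw [h3]
      exact Finset.sum_congr rfl fun μ _ => by
        rw [exp_mulVec_eigen ((t : ℂ) • Jc) (w μ) ((t : ℂ) * (μ : ℂ))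
          (by rw [Matrix.smul_mulVec, hwE μ, smul_smul])]
    have := congrFun (h1.trans h2) i
    rw [this]
    simp only [Finset.sum_apply, Pi.smul_apply, smul_eq_mul]
    exact Finset.sum_congr rfl fun μ _ => by ring
  -- limits
  have hlim : ∀ i : Fin n, Filter.Tendsto
      (fun t : ℝ => Real.exp (-(t * κ1)) * (NormedSpace.exp (t • J) *ᵥ q0) i)
      Filter.atTop (nhds ((u1 ⬝ᵥ q0) * v1 i)) := by
    intro i
    set F : ℝ → ℂ := fun t => ∑ μ : S, c μ * Complex.exp ((t : ℂ) * ((μ : ℂ) - (κ1 : ℂ))) * w μ i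
      with hF
    have hre : ∀ t : ℝ, Real.exp (-(t * κ1)) * (NormedSpace.exp (t • J) *ᵥ q0) i = (F t).re := by
      intro t
      have hcast : ((Real.exp (-(t * κ1)) * (NormedSpace.exp (t • J) *ᵥ q0) i : ℝ) : ℂ)
          = F t := by
        rw [Complex.ofReal_mul, hkey t i, Finset.mul_sum, hF]
        refine Finset.sum_congr rfl fun μ _ => ?_
        rw [Complex.ofReal_exp,
          show ((t : ℂ) * ((μ : ℂ) - (κ1 : ℂ)))
            = ((-(t * κ1) : ℝ) : ℂ) + (t : ℂ) * (μ : ℂ) by push_cast; ring,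
          Complex.exp_add]
        ring
      rw [← hcast, Complex.ofReal_re]
    have hμ0i : (μ0 : ℂ) = (κ1 : ℂ) := rfl
    have hwμ0 : w μ0 = v1c := by simp [hw]
    have hFlim : Filter.Tendsto F Filter.atTop (nhds (((u1 ⬝ᵥ q0) * v1 i : ℝ) : ℂ)) := by
      have hsum : Filter.Tendsto F Filter.atTop
          (nhds (∑ μ : S, if μ = μ0 then c μ0 * w μ0 i else 0)) := by
        apply tendsto_finset_sum
        intro μ _
        by_cases h : μ = μ0
        · rw [if_pos h]
          have hsub : (μ : ℂ) - (κ1 : ℂ) = 0 := by rw [h]; exact sub_self _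
          have heq2 : (fun t : ℝ => c μ * Complex.exp ((t : ℂ) * ((μ : ℂ) - (κ1 : ℂ))) * w μ i)
              = fun _ => c μ0 * w μ0 i := by
            funext t
            rw [hsub, mul_zero, Complex.exp_zero, mul_one, h]
          rw [heq2]
          exact tendsto_const_nhds
        · rw [if_neg h]
          have hlt : (μ : ℂ).re - κ1 < 0 := by
            have : (μ : ℂ) ≠ (κ1 : ℂ) := fun hc => h (Subtype.ext hc)
            linarith [hdom (μ : ℂ) μ.2 this]
          refine squeeze_zero_norm (a := fun t : ℝ =>
            ‖c μ * w μ i‖ * Real.exp (t * ((μ : ℂ).re - κ1))) (fun t => ?_) ?_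
          · refine le_of_eq ?_
            rw [show c μ * Complex.exp ((t : ℂ) * ((μ : ℂ) - (κ1 : ℂ))) * w μ i
              = (c μ * w μ i) * Complex.exp ((t : ℂ) * ((μ : ℂ) - (κ1 : ℂ))) by ring]
            rw [norm_mul, Complex.norm_exp]
            congr 2
            simp [Complex.mul_re]
          · rw [show (0 : ℝ) = ‖c μ * w μ i‖ * 0 by ring]
            apply Filter.Tendsto.const_mul
            apply Real.tendsto_exp_atBot.comp
            exact Filter.Tendsto.atTop_mul_const_of_neg hlt Filter.tendsto_id
      rw [Finset.sum_ite_eq' Finset.univ μ0 (fun _ => c μ0 * w μ0 i)] at hsum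
      simp only [Finset.mem_univ, if_true] at hsum
      have : c μ0 * w μ0 i = (((u1 ⬝ᵥ q0) * v1 i : ℝ) : ℂ) := by
        rw [hc0, hwμ0]
        simp [hv1c]
      rwa [this] at hsum
    have := (Complex.continuous_re.tendsto _).comp hFlim
    simp only [Complex.ofReal_re] at this
    have heq : (fun t : ℝ => Real.exp (-(t * κ1)) * (NormedSpace.exp (t • J) *ᵥ q0) i)
        = fun t => (F t).re := funext hre
    rw [heq]
    exact this
  constructor
  · intro hq
    have hev' : ∀ᶠ t in (Filter.atTop : Filter ℝ), ∀ i, 0 < (NormedSpace.exp (t • J) *ᵥ q0) i := by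
      rw [Filter.eventually_all]
      intro i
      have hL : 0 < (u1 ⬝ᵥ q0) * v1 i := mul_pos hq (hpos i)
      filter_upwards [(hlim i).eventually_const_lt hL] with t ht
      nlinarith [Real.exp_pos (-(t * κ1))]
    obtain ⟨T, hT⟩ := Filter.eventually_atTop.mp hev'
    exact ⟨T, fun t ht => hT t ht.le⟩
  · intro hq
    have hev' : ∀ᶠ t in (Filter.atTop : Filter ℝ), ∀ i, (NormedSpace.exp (t • J) *ᵥ q0) i < 0 := by
      rw [Filter.eventually_all]
      intro i
      have hL : (u1 ⬝ᵥ q0) * v1 i < 0 := mul_neg_of_neg_of_pos hq (hpos i)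
      filter_upwards [(hlim i).eventually_lt_const hL] with t ht
      nlinarith [Real.exp_pos (-(t * κ1))]
    obtain ⟨T, hT⟩ := Filter.eventually_atTop.mp hev'
    exact ⟨T, fun t ht => hT t ht.le⟩
end
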